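/- (Dubins–Freedman, part b) Let (ℱ_n)_{n≥0} be a filtration and A_n ∈ ℱ_n events with q_n = P(A_n | ℱ_{n-1}). Then almost surely on the event {∑_{i=1}^∞ q_i = ∞}, the ratio (∑_{i=1}^n 1_{A_i}) / (∑_{i=1}^n q_i) converges to 1 as n → ∞. -/

import Mathlib

open MeasureTheory Filter Topology
open scoped NNReal ENNReal
set_option linter.unusedSectionVars false

lemma df_abs_le_sq_add_one (x : ℝ) : |x| ≤ x ^ 2 + 1 := by
  nlinarith [sq_nonneg (|x| - 1), sq_abs x, abs_nonneg x]

lemma df_abel_aux (b D : ℕ → ℝ) (N : ℕ) : ∀ n, N ≤ n →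
    ∑ i ∈ Finset.Ico N n, b (i + 1) * (D (i + 1) - D i)
      = b n * D n - b N * D N - ∑ i ∈ Finset.Ico N n, (b (i + 1) - b i) * D i := by
  intro n hn
  induction n, hn using Nat.le_induction with
  | base => simp
  | succ n hn ih =>
      rw [Finset.sum_Ico_succ_top (by omega), Finset.sum_Ico_succ_top (by omega), ih]
      ring

lemma df_kronecker {b : ℕ → ℝ} (hb1 : ∀ n, 1 ≤ b n) (hmono : Monotone b)
    (hbtop : Tendsto b atTop atTop) {a : ℕ → ℝ} {c : ℝ}
    (hC : Tendsto (fun n => ∑ i ∈ Finset.range n, a i / b (i + 1)) atTop (𝓝 c)) :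
    Tendsto (fun n => (∑ i ∈ Finset.range n, a i) / b n) atTop (𝓝 0) := by
  set C : ℕ → ℝ := fun n => ∑ i ∈ Finset.range n, a i / b (i + 1) with hCdef
  have hbpos : ∀ n, 0 < b n := fun n => zero_lt_one.trans_le (hb1 n)
  have ha : ∀ i, a i = b (i + 1) * (C (i + 1) - C i) := by
    intro i
    have h1 : C (i + 1) - C i = a i / b (i + 1) := by
      simp [hCdef, Finset.sum_range_succ]
    rw [h1, mul_div_cancel₀ _ (hbpos (i + 1)).ne']
  rw [Metric.tendsto_atTop]
  intro ε hε
  obtain ⟨N, hN⟩ := Metric.tendsto_atTop.mp hC (ε / 8) (by positivity)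
  have hD : ∀ m, N ≤ m → |C m - C N| ≤ ε / 4 := by
    intro m hm
    have h1 := hN m hm
    have h2 := hN N le_rfl
    rw [Real.dist_eq] at h1 h2
    have h3 := abs_sub_le (C m) c (C N)
    rw [abs_sub_comm c (C N)] at h3
    linarith
  set K := |∑ i ∈ Finset.range N, a i| with hK
  have hK0 : 0 ≤ K := abs_nonneg _
  have hsum : ∀ n, N ≤ n → |∑ i ∈ Finset.range n, a i| ≤ K + b n * (ε / 2) := by
    intro n hn
    have hIco : ∑ i ∈ Finset.Ico N n, a i
        = ∑ i ∈ Finset.range n, a i - ∑ i ∈ Finset.range N, a i :=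
      Finset.sum_Ico_eq_sub _ hn
    have e1 : ∑ i ∈ Finset.Ico N n, a i
        = b n * (C n - C N) - ∑ i ∈ Finset.Ico N n, (b (i + 1) - b i) * (C i - C N) := by
      calc ∑ i ∈ Finset.Ico N n, a i
          = ∑ i ∈ Finset.Ico N n, b (i + 1) * ((C (i + 1) - C N) - (C i - C N)) :=
            Finset.sum_congr rfl (fun i _ => by rw [sub_sub_sub_cancel_right]; exact ha i)
        _ = b n * (C n - C N) - b N * (C N - C N)
            - ∑ i ∈ Finset.Ico N n, (b (i + 1) - b i) * (C i - C N) :=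
            df_abel_aux b (fun i => C i - C N) N n hn
        _ = b n * (C n - C N) - ∑ i ∈ Finset.Ico N n, (b (i + 1) - b i) * (C i - C N) := by
            rw [sub_self, mul_zero, sub_zero]
    have htel : ∑ i ∈ Finset.Ico N n, (b (i + 1) - b i) = b n - b N := by
      rw [Finset.sum_Ico_eq_sub _ hn, Finset.sum_range_sub, Finset.sum_range_sub]
      ring
    have e2 : |∑ i ∈ Finset.Ico N n, (b (i + 1) - b i) * (C i - C N)| ≤ (b n - b N) * (ε / 4) := by
      calc |∑ i ∈ Finset.Ico N n, (b (i + 1) - b i) * (C i - C N)|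
          ≤ ∑ i ∈ Finset.Ico N n, |(b (i + 1) - b i) * (C i - C N)| :=
            Finset.abs_sum_le_sum_abs _ _
        _ ≤ ∑ i ∈ Finset.Ico N n, (b (i + 1) - b i) * (ε / 4) := by
            refine Finset.sum_le_sum (fun i hi => ?_)
            rw [abs_mul, abs_of_nonneg (sub_nonneg.2 (hmono (Nat.le_succ i)))]
            exact mul_le_mul_of_nonneg_left (hD i (Finset.mem_Ico.1 hi).1)
              (sub_nonneg.2 (hmono (Nat.le_succ i)))
        _ = (b n - b N) * (ε / 4) := by rw [← Finset.sum_mul, htel]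
    have e3 : |b n * (C n - C N)| ≤ b n * (ε / 4) := by
      rw [abs_mul, abs_of_pos (hbpos n)]
      exact mul_le_mul_of_nonneg_left (hD n hn) (hbpos n).le
    have e4 : |∑ i ∈ Finset.range n, a i|
        ≤ K + |b n * (C n - C N)| + |∑ i ∈ Finset.Ico N n, (b (i + 1) - b i) * (C i - C N)| := by
      have : ∑ i ∈ Finset.range n, a i
          = (∑ i ∈ Finset.range N, a i) + (b n * (C n - C N)
            - ∑ i ∈ Finset.Ico N n, (b (i + 1) - b i) * (C i - C N)) := by
        rw [← e1]; linarith [hIco]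
      rw [this]
      have t1 := abs_add_le (∑ i ∈ Finset.range N, a i) (b n * (C n - C N)
            - ∑ i ∈ Finset.Ico N n, (b (i + 1) - b i) * (C i - C N))
      have t2 : |b n * (C n - C N)
            - ∑ i ∈ Finset.Ico N n, (b (i + 1) - b i) * (C i - C N)|
          ≤ |b n * (C n - C N)|
            + |∑ i ∈ Finset.Ico N n, (b (i + 1) - b i) * (C i - C N)| := by
        rw [sub_eq_add_neg]
        exact (abs_add_le _ _).trans (by rw [abs_neg])
      linarith
    nlinarith [hb1 N, hε.le, hbpos n]
  obtain ⟨N₂, hN₂⟩ := (hbtop.eventually_ge_atTop (2 * (K + 1) / ε)).exists_forall_of_atTop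
  refine ⟨max N N₂, fun n hn => ?_⟩
  have hn1 : N ≤ n := le_trans (le_max_left _ _) hn
  have hn2 : N₂ ≤ n := le_trans (le_max_right _ _) hn
  have hb2 : 2 * (K + 1) / ε ≤ b n := hN₂ n hn2
  rw [Real.dist_eq, sub_zero, abs_div, abs_of_pos (hbpos n), div_lt_iff₀ (hbpos n)]
  have h2 : 2 * (K + 1) ≤ b n * ε := by rw [div_le_iff₀ hε] at hb2; linarith
  have h3 := hsum n hn1
  nlinarith

namespace DFaux

variable {Ω : Type*} {m0 : MeasurableSpace Ω}

section Defs
variable (μ : Measure Ω) (ℱ : Filtration ℕ m0) (A : ℕ → Set Ω)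

noncomputable def X (n : ℕ) : Ω → ℝ := (A n).indicator (fun _ => (1 : ℝ))

noncomputable def q (n : ℕ) : Ω → ℝ :=
  fun ω => max 0 (min 1 ((μ[X A n | ℱ n]) ω))

noncomputable def B (n : ℕ) : Ω → ℝ := fun ω => 1 + ∑ i ∈ Finset.range n, q μ ℱ A i ω

noncomputable def U (n : ℕ) : Ω → ℝ :=
  fun ω => (X A n ω - q μ ℱ A n ω) / B μ ℱ A (n + 1) ω

noncomputable def M (n : ℕ) : Ω → ℝ := fun ω => ∑ i ∈ Finset.range n, U μ ℱ A i ω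

end Defs

variable (μ : Measure Ω) [IsProbabilityMeasure μ] (ℱ : Filtration ℕ m0) (A : ℕ → Set Ω)

lemma int_bdd {f : Ω → ℝ} (hf : AEStronglyMeasurable f μ) {C : ℝ} (h : ∀ ω, |f ω| ≤ C) :
    Integrable f μ :=
  ⟨hf, HasFiniteIntegral.of_bounded (C := C)
    (Eventually.of_forall fun ω => by rw [Real.norm_eq_abs]; exact h ω)⟩

lemma X_nonneg (n : ℕ) (ω : Ω) : 0 ≤ X A n ω := by
  unfold X Set.indicator; split_ifs <;> norm_num

lemma X_le_one (n : ℕ) (ω : Ω) : X A n ω ≤ 1 := by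
  unfold X Set.indicator; split_ifs <;> norm_num

variable {A} in
lemma X_sm (hA : ∀ n, MeasurableSet[ℱ (n + 1)] (A n)) (n : ℕ) :
    StronglyMeasurable[ℱ (n + 1)] (X A n) :=
  stronglyMeasurable_const.indicator (hA n)

variable {A} in
lemma X_int (hA : ∀ n, MeasurableSet[ℱ (n + 1)] (A n)) (n : ℕ) : Integrable (X A n) μ :=
  int_bdd μ (((X_sm ℱ hA n).mono (ℱ.le _)).aestronglyMeasurable)
    (fun ω => abs_le.2 ⟨by linarith [X_nonneg A n ω], X_le_one A n ω⟩)

lemma q_nonneg (n : ℕ) (ω : Ω) : 0 ≤ q μ ℱ A n ω := le_max_left _ _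

lemma q_le_one (n : ℕ) (ω : Ω) : q μ ℱ A n ω ≤ 1 :=
  max_le zero_le_one (min_le_left _ _)

lemma q_sm (n : ℕ) : StronglyMeasurable[ℱ n] (q μ ℱ A n) :=
  (Measurable.max measurable_const
    (Measurable.min measurable_const stronglyMeasurable_condExp.measurable)).stronglyMeasurable

lemma q_int (n : ℕ) : Integrable (q μ ℱ A n) μ :=
  int_bdd μ (((q_sm μ ℱ A n).mono (ℱ.le _)).aestronglyMeasurable)
    (fun ω => abs_le.2 ⟨by linarith [q_nonneg μ ℱ A n ω], q_le_one μ ℱ A n ω⟩)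

variable {A} in
lemma q_ae (hA : ∀ n, MeasurableSet[ℱ (n + 1)] (A n)) (n : ℕ) :
    q μ ℱ A n =ᵐ[μ] μ[X A n | ℱ n] := by
  have h0 : 0 ≤ᵐ[μ] μ[X A n | ℱ n] :=
    condExp_nonneg (Eventually.of_forall (X_nonneg A n))
  have h1 : μ[X A n | ℱ n] ≤ᵐ[μ] fun _ => (1 : ℝ) := by
    have := condExp_mono (μ := μ) (m := ℱ n) (X_int μ ℱ hA n) (integrable_const (1 : ℝ))
      (Eventually.of_forall (X_le_one A n))
    refine this.trans ?_
    rw [condExp_const (ℱ.le n)]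
  filter_upwards [h0, h1] with ω hω0 hω1
  simp only [Pi.zero_apply] at hω0
  simp only [q]
  rw [min_eq_right hω1, max_eq_right hω0]

lemma B_ge_one (n : ℕ) (ω : Ω) : 1 ≤ B μ ℱ A n ω :=
  le_add_of_nonneg_right (Finset.sum_nonneg fun i _ => q_nonneg μ ℱ A i ω)

lemma B_pos (n : ℕ) (ω : Ω) : 0 < B μ ℱ A n ω := zero_lt_one.trans_le (B_ge_one μ ℱ A n ω)

lemma B_succ (n : ℕ) (ω : Ω) : B μ ℱ A (n + 1) ω = B μ ℱ A n ω + q μ ℱ A n ω := by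
  simp only [B, Finset.sum_range_succ]; ring

lemma B_mono (ω : Ω) : Monotone fun n => B μ ℱ A n ω :=
  monotone_nat_of_le_succ fun n => by
    rw [B_succ]; linarith [q_nonneg μ ℱ A n ω]

lemma B_sm (n : ℕ) : StronglyMeasurable[ℱ n] (B μ ℱ A (n + 1)) := by
  apply StronglyMeasurable.add stronglyMeasurable_const
  apply Finset.stronglyMeasurable_fun_sum
  intro i hi
  exact (q_sm μ ℱ A i).mono (ℱ.mono (Nat.lt_succ_iff.1 (Finset.mem_range.1 hi)))

lemma U_abs_le (n : ℕ) (ω : Ω) : |U μ ℱ A n ω| ≤ 1 := by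
  rw [U, abs_div, abs_of_pos (B_pos μ ℱ A (n + 1) ω), div_le_one (B_pos μ ℱ A (n + 1) ω)]
  refine le_trans ?_ (B_ge_one μ ℱ A (n + 1) ω)
  rw [abs_le]
  constructor <;>
    [linarith [X_nonneg A n ω, q_le_one μ ℱ A n ω];
     linarith [X_le_one A n ω, q_nonneg μ ℱ A n ω]]

variable {A} in
lemma U_sm (hA : ∀ n, MeasurableSet[ℱ (n + 1)] (A n)) (n : ℕ) :
    StronglyMeasurable[ℱ (n + 1)] (U μ ℱ A n) :=
  (((X_sm ℱ hA n).measurable.sub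
      (((q_sm μ ℱ A n).mono (ℱ.mono (Nat.le_succ n))).measurable)).div
    (((B_sm μ ℱ A n).mono (ℱ.mono (Nat.le_succ n))).measurable)).stronglyMeasurable

variable {A} in
lemma M_sm (hA : ∀ n, MeasurableSet[ℱ (n + 1)] (A n)) (n : ℕ) :
    StronglyMeasurable[ℱ n] (M μ ℱ A n) := by
  apply Finset.stronglyMeasurable_fun_sum
  intro i hi
  exact (U_sm μ ℱ hA i).mono (ℱ.mono (Finset.mem_range.1 hi))

lemma M_abs_le (n : ℕ) (ω : Ω) : |M μ ℱ A n ω| ≤ n := by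
  refine le_trans (Finset.abs_sum_le_sum_abs _ _) ?_
  calc ∑ i ∈ Finset.range n, |U μ ℱ A i ω| ≤ ∑ _i ∈ Finset.range n, (1 : ℝ) :=
        Finset.sum_le_sum fun i _ => U_abs_le μ ℱ A i ω
    _ = n := by simp

variable {A} in
lemma M_int (hA : ∀ n, MeasurableSet[ℱ (n + 1)] (A n)) (n : ℕ) : Integrable (M μ ℱ A n) μ :=
  int_bdd μ (((M_sm μ ℱ hA n).mono (ℱ.le _)).aestronglyMeasurable) (M_abs_le μ ℱ A n)


variable {A} in
lemma U_int (hA : ∀ n, MeasurableSet[ℱ (n + 1)] (A n)) (n : ℕ) : Integrable (U μ ℱ A n) μ :=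
  int_bdd μ (((U_sm μ ℱ hA n).mono (ℱ.le _)).aestronglyMeasurable) (U_abs_le μ ℱ A n)

variable {A} in
lemma cx (hA : ∀ n, MeasurableSet[ℱ (n + 1)] (A n)) (n : ℕ) :
    μ[X A n - q μ ℱ A n | ℱ n] =ᵐ[μ] 0 := by
  refine (condExp_sub (X_int μ ℱ hA n) (q_int μ ℱ A n) _).trans ?_
  rw [condExp_of_stronglyMeasurable (ℱ.le n) (q_sm μ ℱ A n) (q_int μ ℱ A n)]
  filter_upwards [q_ae μ ℱ hA n] with ω hω
  simp only [Pi.sub_apply, Pi.zero_apply, hω, sub_self]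

variable {A} in
lemma pull (hA : ∀ n, MeasurableSet[ℱ (n + 1)] (A n)) (n : ℕ) {h : Ω → ℝ}
    (hsm : StronglyMeasurable[ℱ n] h) {C : ℝ} (hbd : ∀ ω, |h ω| ≤ C) :
    ∫ ω, h ω * (X A n ω - q μ ℱ A n ω) ∂μ = 0 := by
  have hXq : ∀ ω, |X A n ω - q μ ℱ A n ω| ≤ 1 := by
    intro ω
    rw [abs_le]
    constructor <;>
      [linarith [X_nonneg A n ω, q_le_one μ ℱ A n ω];
       linarith [X_le_one A n ω, q_nonneg μ ℱ A n ω]]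
  have heq : (fun ω => h ω * (X A n ω - q μ ℱ A n ω)) = h * (X A n - q μ ℱ A n) := rfl
  have hint2 : Integrable (X A n - q μ ℱ A n) μ := (X_int μ ℱ hA n).sub (q_int μ ℱ A n)
  have hint1 : Integrable (h * (X A n - q μ ℱ A n)) μ := by
    refine int_bdd μ (((hsm.mono (ℱ.le n)).mul
      (((X_sm ℱ hA n).mono (ℱ.le _)).sub ((q_sm μ ℱ A n).mono (ℱ.le _)))).aestronglyMeasurable)
      (C := C) (fun ω => ?_)
    have h0 : (0:ℝ) ≤ C := le_trans (abs_nonneg _) (hbd ω)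
    calc |(h * (X A n - q μ ℱ A n)) ω| = |h ω| * |X A n ω - q μ ℱ A n ω| := abs_mul _ _
      _ ≤ C * 1 := mul_le_mul (hbd ω) (hXq ω) (abs_nonneg _) h0
      _ = C := mul_one C
  rw [heq, ← integral_condExp (ℱ.le n) (f := h * (X A n - q μ ℱ A n))]
  have h0 : μ[h * (X A n - q μ ℱ A n)|ℱ n] =ᵐ[μ] 0 := by
    refine (condExp_mul_of_stronglyMeasurable_left hsm hint1 hint2).trans ?_
    filter_upwards [cx μ ℱ hA n] with ω hω
    simp only [Pi.mul_apply, Pi.zero_apply] at hω ⊢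
    rw [hω, mul_zero]
  rw [integral_congr_ae h0]; simp

variable {A} in
lemma U_condexp (hA : ∀ n, MeasurableSet[ℱ (n + 1)] (A n)) (n : ℕ) :
    μ[U μ ℱ A n | ℱ n] =ᵐ[μ] 0 := by
  have heq : U μ ℱ A n = (fun ω => (B μ ℱ A (n + 1) ω)⁻¹) * (X A n - q μ ℱ A n) := by
    funext ω
    simp only [U, Pi.mul_apply, Pi.sub_apply, div_eq_mul_inv]
    ring
  have hrsm : StronglyMeasurable[ℱ n] (fun ω => (B μ ℱ A (n + 1) ω)⁻¹) :=
    (B_sm μ ℱ A n).measurable.inv.stronglyMeasurable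
  have hint2 : Integrable (X A n - q μ ℱ A n) μ := (X_int μ ℱ hA n).sub (q_int μ ℱ A n)
  have hint1 : Integrable ((fun ω => (B μ ℱ A (n + 1) ω)⁻¹) * (X A n - q μ ℱ A n)) μ := by
    rw [← heq]; exact U_int μ ℱ hA n
  rw [heq]
  refine (condExp_mul_of_stronglyMeasurable_left hrsm hint1 hint2).trans ?_
  filter_upwards [cx μ ℱ hA n] with ω hω
  simp only [Pi.mul_apply, Pi.zero_apply] at hω ⊢
  rw [hω, mul_zero]

lemma M_succ (n : ℕ) : M μ ℱ A (n + 1) = M μ ℱ A n + U μ ℱ A n := by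
  funext ω; simp [M, Finset.sum_range_succ]

variable {A} in
lemma M_mart (hA : ∀ n, MeasurableSet[ℱ (n + 1)] (A n)) : Martingale (M μ ℱ A) ℱ μ := by
  refine martingale_nat (fun n => M_sm μ ℱ hA n) (M_int μ ℱ hA) fun n => ?_
  rw [M_succ]
  refine EventuallyEq.symm ?_
  refine (condExp_add (M_int μ ℱ hA n) (U_int μ ℱ hA n) _).trans ?_
  rw [condExp_of_stronglyMeasurable (ℱ.le n) (M_sm μ ℱ hA n) (M_int μ ℱ hA n)]
  filter_upwards [U_condexp μ ℱ hA n] with ω hω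
  simp only [Pi.add_apply, Pi.zero_apply] at hω ⊢
  rw [hω, add_zero]


noncomputable def T (μ : Measure Ω) (ℱ : Filtration ℕ m0) (A : ℕ → Set Ω) (n : ℕ) : Ω → ℝ :=
  fun ω => (B μ ℱ A n ω)⁻¹ - (B μ ℱ A (n + 1) ω)⁻¹

lemma B_zero (ω : Ω) : B μ ℱ A 0 ω = 1 := by simp [B]

lemma sum_T (n : ℕ) (ω : Ω) :
    ∑ i ∈ Finset.range n, T μ ℱ A i ω = 1 - (B μ ℱ A n ω)⁻¹ := by
  have := Finset.sum_range_sub' (fun i => (B μ ℱ A i ω)⁻¹) n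
  simp only [T]
  rw [this, B_zero, inv_one]

lemma T_nonneg (n : ℕ) (ω : Ω) : 0 ≤ T μ ℱ A n ω := by
  have h1 := B_pos μ ℱ A n ω
  have h2 := B_pos μ ℱ A (n + 1) ω
  have h3 := B_mono μ ℱ A ω (Nat.le_succ n)
  simp only [T, sub_nonneg]
  exact inv_anti₀ h1 h3

lemma T_le_one (n : ℕ) (ω : Ω) : T μ ℱ A n ω ≤ 1 := by
  have h1 := B_ge_one μ ℱ A n ω
  have h2 := B_pos μ ℱ A (n + 1) ω
  have h3 : (B μ ℱ A n ω)⁻¹ ≤ 1 := inv_le_one_of_one_le₀ h1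
  have h4 : 0 < (B μ ℱ A (n + 1) ω)⁻¹ := inv_pos.2 h2
  simp only [T]
  linarith

lemma B_sm' (n : ℕ) : StronglyMeasurable[ℱ n] (B μ ℱ A n) := by
  apply StronglyMeasurable.add stronglyMeasurable_const
  apply Finset.stronglyMeasurable_fun_sum
  intro i hi
  exact (q_sm μ ℱ A i).mono (ℱ.mono (le_of_lt (Finset.mem_range.1 hi)))

lemma T_int (n : ℕ) : Integrable (T μ ℱ A n) μ := by
  refine int_bdd μ ?_ (C := 1) (fun ω => ?_)
  · exact (((((B_sm' μ ℱ A n).mono (ℱ.le _)).measurable.inv).sub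
      (((B_sm μ ℱ A n).mono (ℱ.le _)).measurable.inv)).stronglyMeasurable).aestronglyMeasurable
  · rw [abs_le]
    exact ⟨by linarith [T_nonneg μ ℱ A n ω], T_le_one μ ℱ A n ω⟩


variable {A} in
lemma Msq_int (hA : ∀ n, MeasurableSet[ℱ (n + 1)] (A n)) (n : ℕ) :
    Integrable (fun ω => (M μ ℱ A n ω) ^ 2) μ := by
  refine int_bdd μ ((((M_sm μ ℱ hA n).mono (ℱ.le _)).measurable.pow_const
    2).stronglyMeasurable.aestronglyMeasurable) (C := (n : ℝ) ^ 2) (fun ω => ?_)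
  rw [abs_pow]
  exact pow_le_pow_left₀ (abs_nonneg _) (M_abs_le μ ℱ A n ω) 2

variable {A} in
lemma MU_int (hA : ∀ n, MeasurableSet[ℱ (n + 1)] (A n)) (n : ℕ) :
    Integrable (fun ω => M μ ℱ A n ω * U μ ℱ A n ω) μ := by
  refine int_bdd μ ((((M_sm μ ℱ hA n).mono (ℱ.le _)).measurable.mul
    (((U_sm μ ℱ hA n).mono (ℱ.le _)).measurable)).stronglyMeasurable.aestronglyMeasurable)
    (C := (n : ℝ)) (fun ω => ?_)
  rw [abs_mul]
  calc |M μ ℱ A n ω| * |U μ ℱ A n ω| ≤ (n : ℝ) * 1 :=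
        mul_le_mul (M_abs_le μ ℱ A n ω) (U_abs_le μ ℱ A n ω) (abs_nonneg _) (Nat.cast_nonneg n)
    _ = n := mul_one _

variable {A} in
lemma Usq_int (hA : ∀ n, MeasurableSet[ℱ (n + 1)] (A n)) (n : ℕ) :
    Integrable (fun ω => (U μ ℱ A n ω) ^ 2) μ := by
  refine int_bdd μ ((((U_sm μ ℱ hA n).mono (ℱ.le _)).measurable.pow_const
    2).stronglyMeasurable.aestronglyMeasurable) (C := 1) (fun ω => ?_)
  rw [abs_pow]
  calc |U μ ℱ A n ω| ^ 2 ≤ 1 ^ 2 := pow_le_pow_left₀ (abs_nonneg _) (U_abs_le μ ℱ A n ω) 2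
    _ = 1 := one_pow 2

variable {A} in
lemma cross_zero (hA : ∀ n, MeasurableSet[ℱ (n + 1)] (A n)) (n : ℕ) :
    ∫ ω, M μ ℱ A n ω * U μ ℱ A n ω ∂μ = 0 := by
  have heq : (fun ω => M μ ℱ A n ω * U μ ℱ A n ω)
      = fun ω => (M μ ℱ A n ω * (B μ ℱ A (n + 1) ω)⁻¹) * (X A n ω - q μ ℱ A n ω) := by
    funext ω
    simp only [U, div_eq_mul_inv]
    ring
  rw [show (fun ω => M μ ℱ A n ω * U μ ℱ A n ω)
      = fun ω => (M μ ℱ A n ω * (B μ ℱ A (n + 1) ω)⁻¹) * (X A n ω - q μ ℱ A n ω) from heq]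
  refine pull μ ℱ hA n (h := fun ω => M μ ℱ A n ω * (B μ ℱ A (n + 1) ω)⁻¹)
    (((M_sm μ ℱ hA n).measurable.mul (B_sm μ ℱ A n).measurable.inv).stronglyMeasurable)
    (C := (n : ℝ)) (fun ω => ?_)
  rw [abs_mul]
  have h1 : |(B μ ℱ A (n + 1) ω)⁻¹| ≤ 1 := by
    rw [abs_of_pos (inv_pos.2 (B_pos μ ℱ A (n + 1) ω))]
    exact inv_le_one_of_one_le₀ (B_ge_one μ ℱ A (n + 1) ω)
  calc |M μ ℱ A n ω| * |(B μ ℱ A (n + 1) ω)⁻¹| ≤ (n : ℝ) * 1 :=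
        mul_le_mul (M_abs_le μ ℱ A n ω) h1 (abs_nonneg _) (Nat.cast_nonneg n)
    _ = n := mul_one _

lemma abs_le_one_mul {x y : ℝ} (hx : |x| ≤ 1) (hy : |y| ≤ 1) : |x * y| ≤ 1 := by
  rw [abs_mul]
  calc |x| * |y| ≤ 1 * 1 := mul_le_mul hx hy (abs_nonneg _) zero_le_one
    _ = 1 := mul_one 1

lemma rsq_abs_le (n : ℕ) (ω : Ω) : |(B μ ℱ A (n + 1) ω)⁻¹ ^ 2| ≤ 1 := by
  have h0 : (0:ℝ) ≤ (B μ ℱ A (n + 1) ω)⁻¹ := (inv_pos.2 (B_pos μ ℱ A (n + 1) ω)).le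
  have h1 : (B μ ℱ A (n + 1) ω)⁻¹ ≤ 1 := inv_le_one_of_one_le₀ (B_ge_one μ ℱ A (n + 1) ω)
  rw [abs_of_nonneg (by positivity)]
  nlinarith

lemma X_abs_le (n : ℕ) (ω : Ω) : |X A n ω| ≤ 1 := by
  rw [abs_of_nonneg (X_nonneg A n ω)]; exact X_le_one A n ω

lemma q_abs_le (n : ℕ) (ω : Ω) : |q μ ℱ A n ω| ≤ 1 := by
  rw [abs_of_nonneg (q_nonneg μ ℱ A n ω)]; exact q_le_one μ ℱ A n ω

lemma rsq_sm (n : ℕ) : StronglyMeasurable[ℱ n] fun ω => (B μ ℱ A (n + 1) ω)⁻¹ ^ 2 :=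
  ((B_sm μ ℱ A n).measurable.inv.pow_const 2).stronglyMeasurable

variable {A} in
lemma Xr_int (hA : ∀ n, MeasurableSet[ℱ (n + 1)] (A n)) (n : ℕ) :
    Integrable (fun ω => X A n ω * (B μ ℱ A (n + 1) ω)⁻¹ ^ 2) μ :=
  int_bdd μ (((((X_sm ℱ hA n).mono (ℱ.le _)).measurable.mul
      (((rsq_sm μ ℱ A n).mono (ℱ.le _)).measurable)).stronglyMeasurable).aestronglyMeasurable)
    (C := 1) (fun ω => abs_le_one_mul (X_abs_le A n ω) (rsq_abs_le μ ℱ A n ω))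

lemma qr_int (n : ℕ) :
    Integrable (fun ω => q μ ℱ A n ω * (B μ ℱ A (n + 1) ω)⁻¹ ^ 2) μ :=
  int_bdd μ (((((q_sm μ ℱ A n).mono (ℱ.le _)).measurable.mul
      (((rsq_sm μ ℱ A n).mono (ℱ.le _)).measurable)).stronglyMeasurable).aestronglyMeasurable)
    (C := 1) (fun ω => abs_le_one_mul (q_abs_le μ ℱ A n ω) (rsq_abs_le μ ℱ A n ω))

variable {A} in
lemma Usq_le (hA : ∀ n, MeasurableSet[ℱ (n + 1)] (A n)) (n : ℕ) :
    ∫ ω, (U μ ℱ A n ω) ^ 2 ∂μ ≤ 2 * ∫ ω, T μ ℱ A n ω ∂μ := by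
  have hXr := Xr_int μ ℱ hA n
  have hqr := qr_int μ ℱ A n
  have e0 : ∫ ω, (B μ ℱ A (n + 1) ω)⁻¹ ^ 2 * (X A n ω - q μ ℱ A n ω) ∂μ = 0 :=
    pull μ ℱ hA n (rsq_sm μ ℱ A n) (C := 1) (rsq_abs_le μ ℱ A n)
  have e1 : ∫ ω, X A n ω * (B μ ℱ A (n + 1) ω)⁻¹ ^ 2 ∂μ
      = ∫ ω, q μ ℱ A n ω * (B μ ℱ A (n + 1) ω)⁻¹ ^ 2 ∂μ := by
    have h2 : (fun ω => X A n ω * (B μ ℱ A (n + 1) ω)⁻¹ ^ 2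
          - q μ ℱ A n ω * (B μ ℱ A (n + 1) ω)⁻¹ ^ 2)
        = fun ω => (B μ ℱ A (n + 1) ω)⁻¹ ^ 2 * (X A n ω - q μ ℱ A n ω) := by
      funext ω; ring
    have h3 : ∫ ω, (X A n ω * (B μ ℱ A (n + 1) ω)⁻¹ ^ 2
        - q μ ℱ A n ω * (B μ ℱ A (n + 1) ω)⁻¹ ^ 2) ∂μ = 0 := by rw [h2]; exact e0
    rw [integral_sub hXr hqr] at h3
    linarith
  have p1 : ∀ ω, (U μ ℱ A n ω) ^ 2 ≤ X A n ω * (B μ ℱ A (n + 1) ω)⁻¹ ^ 2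
      + q μ ℱ A n ω * (B μ ℱ A (n + 1) ω)⁻¹ ^ 2 := by
    intro ω
    have hU : U μ ℱ A n ω = (X A n ω - q μ ℱ A n ω) * (B μ ℱ A (n + 1) ω)⁻¹ := by
      simp only [U, div_eq_mul_inv]
    rw [hU, mul_pow]
    have hsq : (X A n ω - q μ ℱ A n ω) ^ 2 ≤ X A n ω + q μ ℱ A n ω := by
      nlinarith [X_nonneg A n ω, X_le_one A n ω, q_nonneg μ ℱ A n ω, q_le_one μ ℱ A n ω]
    nlinarith [sq_nonneg ((B μ ℱ A (n + 1) ω)⁻¹)]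
  have p2 : ∀ ω, q μ ℱ A n ω * (B μ ℱ A (n + 1) ω)⁻¹ ^ 2 ≤ T μ ℱ A n ω := by
    intro ω
    have hb1 := B_ge_one μ ℱ A n ω
    have hb2 := B_pos μ ℱ A (n + 1) ω
    have hb3 := B_succ μ ℱ A n ω
    have hb4 := q_nonneg μ ℱ A n ω
    have hbpos : (0:ℝ) < B μ ℱ A n ω := by linarith
    have key : T μ ℱ A n ω = q μ ℱ A n ω * ((B μ ℱ A n ω)⁻¹ * (B μ ℱ A (n + 1) ω)⁻¹) := by
      simp only [T]
      field_simp
      linarith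
    rw [key]
    refine mul_le_mul_of_nonneg_left ?_ hb4
    rw [pow_two]
    refine mul_le_mul_of_nonneg_right ?_ (inv_pos.2 hb2).le
    exact inv_anti₀ hbpos (by linarith)
  have c1 : ∫ ω, (U μ ℱ A n ω) ^ 2 ∂μ ≤ ∫ ω, (X A n ω * (B μ ℱ A (n + 1) ω)⁻¹ ^ 2
      + q μ ℱ A n ω * (B μ ℱ A (n + 1) ω)⁻¹ ^ 2) ∂μ :=
    integral_mono (Usq_int μ ℱ hA n) (hXr.add hqr) p1
  rw [integral_add hXr hqr] at c1
  have c2 := integral_mono hqr (T_int μ ℱ A n) p2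
  linarith


variable {A} in
lemma Msq_le (hA : ∀ n, MeasurableSet[ℱ (n + 1)] (A n)) (n : ℕ) :
    ∫ ω, (M μ ℱ A n ω) ^ 2 ∂μ ≤ 2 * ∑ i ∈ Finset.range n, ∫ ω, T μ ℱ A i ω ∂μ := by
  induction n with
  | zero => simp [M]
  | succ n ih =>
      have hexp : (fun ω => (M μ ℱ A (n + 1) ω) ^ 2)
          = fun ω => (M μ ℱ A n ω) ^ 2
            + (2 * (M μ ℱ A n ω * U μ ℱ A n ω) + (U μ ℱ A n ω) ^ 2) := by
        funext ω
        have := congrFun (M_succ μ ℱ A n) ω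
        simp only [Pi.add_apply] at this
        rw [this]; ring
      have hint2 : Integrable (fun ω => 2 * (M μ ℱ A n ω * U μ ℱ A n ω)) μ :=
        (MU_int μ ℱ hA n).const_mul 2
      have hint23 : Integrable (fun ω => 2 * (M μ ℱ A n ω * U μ ℱ A n ω)
          + (U μ ℱ A n ω) ^ 2) μ :=
        (hint2.add (Usq_int μ ℱ hA n)).congr (Eventually.of_forall fun ω => rfl)
      have e : ∫ ω, (M μ ℱ A (n + 1) ω) ^ 2 ∂μ
          = ∫ ω, (M μ ℱ A n ω) ^ 2 ∂μ
            + (∫ ω, 2 * (M μ ℱ A n ω * U μ ℱ A n ω) ∂μ + ∫ ω, (U μ ℱ A n ω) ^ 2 ∂μ) := by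
        rw [show (fun ω => (M μ ℱ A (n + 1) ω) ^ 2) = _ from hexp,
          integral_add (Msq_int μ ℱ hA n) hint23,
          integral_add hint2 (Usq_int μ ℱ hA n)]
      have ecross : ∫ ω, 2 * (M μ ℱ A n ω * U μ ℱ A n ω) ∂μ = 0 := by
        rw [integral_const_mul, cross_zero μ ℱ hA n, mul_zero]
      have hUsq := Usq_le μ ℱ hA n
      rw [Finset.sum_range_succ]
      rw [e, ecross]
      linarith

variable {A} in
lemma sum_intT_le (n : ℕ) : ∑ i ∈ Finset.range n, ∫ ω, T μ ℱ A i ω ∂μ ≤ 1 := by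
  have e : ∑ i ∈ Finset.range n, ∫ ω, T μ ℱ A i ω ∂μ
      = ∫ ω, ∑ i ∈ Finset.range n, T μ ℱ A i ω ∂μ :=
    (integral_finset_sum _ (fun i _ => T_int μ ℱ A i)).symm
  rw [e]
  have hle : ∀ ω, ∑ i ∈ Finset.range n, T μ ℱ A i ω ≤ 1 := by
    intro ω
    rw [sum_T]
    have := inv_pos.2 (B_pos μ ℱ A n ω)
    linarith
  have hint : Integrable (fun ω => ∑ i ∈ Finset.range n, T μ ℱ A i ω) μ := by
    have := integrable_finset_sum (μ := μ) (Finset.range n) (fun i _ => T_int μ ℱ A i)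
    exact this.congr (Eventually.of_forall fun ω => by simp)
  calc ∫ ω, ∑ i ∈ Finset.range n, T μ ℱ A i ω ∂μ ≤ ∫ ω, (fun _ => (1:ℝ)) ω ∂μ :=
        integral_mono hint (integrable_const 1) hle
    _ = 1 := by simp

variable {A} in
lemma M_eLpNorm_le (hA : ∀ n, MeasurableSet[ℱ (n + 1)] (A n)) (n : ℕ) :
    eLpNorm (M μ ℱ A n) 1 μ ≤ ((3 : ℝ≥0) : ℝ≥0∞) := by
  have habs : ∫ ω, ‖M μ ℱ A n ω‖ ∂μ ≤ 3 := by
    have h1 : ∀ ω, ‖M μ ℱ A n ω‖ ≤ (M μ ℱ A n ω) ^ 2 + 1 := by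
      intro ω
      rw [Real.norm_eq_abs]
      exact df_abs_le_sq_add_one _
    have h2 : ∫ ω, ‖M μ ℱ A n ω‖ ∂μ ≤ ∫ ω, ((M μ ℱ A n ω) ^ 2 + 1) ∂μ :=
      integral_mono (M_int μ ℱ hA n).norm ((Msq_int μ ℱ hA n).add (integrable_const 1)) h1
    rw [integral_add (Msq_int μ ℱ hA n) (integrable_const 1)] at h2
    have h3 := (Msq_le μ ℱ hA n).trans
      (by linarith [sum_intT_le μ ℱ (A := A) n] : 2 * ∑ i ∈ Finset.range n,
        ∫ ω, T μ ℱ A i ω ∂μ ≤ 2)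
    simp only [integral_const, measure_univ, probReal_univ, ENNReal.toReal_one, smul_eq_mul, one_mul] at h2
    linarith
  rw [eLpNorm_one_eq_lintegral_enorm, ← ofReal_integral_norm_eq_lintegral_enorm (M_int μ ℱ hA n)]
  refine le_trans (ENNReal.ofReal_le_ofReal habs) ?_
  norm_num

variable {A} in
lemma M_tendsto (hA : ∀ n, MeasurableSet[ℱ (n + 1)] (A n)) :
    ∀ᵐ ω ∂μ, ∃ c, Tendsto (fun n => M μ ℱ A n ω) atTop (𝓝 c) :=
  (M_mart μ ℱ hA).submartingale.exists_ae_tendsto_of_bdd (R := 3) (M_eLpNorm_le μ ℱ hA)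

end DFaux

open DFaux in
/-- Dubins–Freedman, part b: For a filtration `(ℱ_n)` and events
`A_n ∈ ℱ_n` with `q_n = P(A_n | ℱ_{n-1})`, almost surely on `{∑ q_n = ∞}` the ratio
`(∑_{i<n} 1_{A_i}) / (∑_{i<n} q_i)` converges to `1`. -/
theorem dubins_freedman_divergent {Ω : Type*} {m0 : MeasurableSpace Ω}
    (μ : Measure Ω) [IsProbabilityMeasure μ] (ℱ : Filtration ℕ m0)
    (A : ℕ → Set Ω) (hA : ∀ n, MeasurableSet[ℱ (n + 1)] (A n)) :
    ∀ᵐ ω ∂μ,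
      ¬ (Summable fun n => (μ[(A n).indicator (fun _ => (1 : ℝ)) | ℱ n]) ω) →
        Tendsto
          (fun n => (∑ i ∈ Finset.range n, (A i).indicator (fun _ => (1 : ℝ)) ω) /
            (∑ i ∈ Finset.range n, (μ[(A i).indicator (fun _ => (1 : ℝ)) | ℱ i]) ω))
          atTop (nhds 1) := by
  have hconv := M_tendsto μ ℱ hA
  have hae : ∀ᵐ ω ∂μ, ∀ n,
      q μ ℱ A n ω = (μ[(A n).indicator (fun _ => (1 : ℝ)) | ℱ n]) ω := by
    rw [ae_all_iff]
    intro n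
    exact q_ae μ ℱ hA n
  filter_upwards [hconv, hae] with ω hc hq hns
  obtain ⟨c, hc⟩ := hc
  have hns' : ¬ Summable (fun n => q μ ℱ A n ω) := by
    rw [funext hq]; exact hns
  have hQtop : Tendsto (fun n => ∑ i ∈ Finset.range n, q μ ℱ A i ω) atTop atTop :=
    (not_summable_iff_tendsto_nat_atTop_of_nonneg (fun n => q_nonneg μ ℱ A n ω)).1 hns'
  set Qs : ℕ → ℝ := fun n => ∑ i ∈ Finset.range n, q μ ℱ A i ω with hQs
  set b : ℕ → ℝ := fun n => B μ ℱ A n ω with hbdef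
  set S : ℕ → ℝ := fun n => ∑ i ∈ Finset.range n, (A i).indicator (fun _ => (1 : ℝ)) ω
    with hSdef
  have hb1 : ∀ n, 1 ≤ b n := fun n => B_ge_one μ ℱ A n ω
  have hmono : Monotone b := B_mono μ ℱ A ω
  have hbtop : Tendsto b atTop atTop := by
    have hbe : b = fun n => 1 + Qs n := rfl
    rw [hbe]
    exact tendsto_atTop_add_const_left _ 1 hQtop
  set a : ℕ → ℝ := fun i => (A i).indicator (fun _ => (1 : ℝ)) ω - q μ ℱ A i ω with hadef
  have hM : (fun n => M μ ℱ A n ω) = fun n => ∑ i ∈ Finset.range n, a i / b (i + 1) := by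
    funext n
    exact Finset.sum_congr rfl (fun i _ => rfl)
  rw [hM] at hc
  have hkron := df_kronecker hb1 hmono hbtop hc
  have hS : ∀ n, ∑ i ∈ Finset.range n, a i = S n - Qs n := by
    intro n
    simp only [hadef, hSdef, hQs, Finset.sum_sub_distrib]
  have hkron' : Tendsto (fun n => (S n - Qs n) / b n) atTop (𝓝 0) := by
    refine hkron.congr (fun n => ?_)
    rw [hS]
  have hQev : ∀ᶠ n in atTop, (1:ℝ) ≤ Qs n := hQtop.eventually_ge_atTop 1
  have hinv : Tendsto (fun n => (Qs n)⁻¹) atTop (𝓝 0) := hQtop.inv_tendsto_atTop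
  have hbQ : Tendsto (fun n => b n / Qs n) atTop (𝓝 1) := by
    have h1 : Tendsto (fun n => (Qs n)⁻¹ + 1) atTop (𝓝 (0 + 1)) :=
      hinv.add tendsto_const_nhds
    rw [zero_add] at h1
    refine Tendsto.congr' ?_ h1
    filter_upwards [hQev] with n hn
    have hQne : Qs n ≠ 0 := by linarith
    have hbe : b n = 1 + Qs n := rfl
    rw [hbe]
    field_simp
  have key : Tendsto (fun n => ((S n - Qs n) / b n) * (b n / Qs n) + 1) atTop (𝓝 1) := by
    have := (hkron'.mul hbQ).add (tendsto_const_nhds (x := (1:ℝ)))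
    rw [zero_mul, zero_add] at this
    exact this
  have hgoal : Tendsto (fun n => S n / Qs n) atTop (𝓝 1) := by
    refine Tendsto.congr' ?_ key
    filter_upwards [hQev] with n hn
    have hQne : Qs n ≠ 0 := by linarith
    have hbne : b n ≠ 0 := by have := hb1 n; linarith
    field_simp
    ring
  refine hgoal.congr (fun n => ?_)
  congr 1
  exact Finset.sum_congr rfl (fun i _ => hq i)
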